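/- arXiv:1307.2388 — 4 statements merged into one kernel-verified Lean document; each statement's English description precedes it below -/
import Mathlib

section
/- Let k be a real closed field, let K = k(z) be the rational function field with the derivation d/dz (so the field of constants of K is k). Let L₁ = K(t₁) where t₁² = z and L₂ = K(t₂) where t₂² = −z, each equipped with the unique derivation extending that of K. Then L₁ and L₂ are both real Picard–Vessiot fields for the equation y′ = (1/(2z)) y over K. -/
/-- A derivation on a field `F`. -/
structure FieldDeriv (F : Type) [Field F] : Type where
  d : F → F
  map_add : ∀ a b : F, d (a + b) = d a + d b
  leibniz : ∀ a b : F, d (a * b) = a * d b + d a * b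

/-- A field is (formally) real if `-1` is not a sum of squares. -/
def IsFormallyRealField (F : Type) [Field F] : Prop :=
  ¬ IsSumSq (-1 : F)

/-- A field is real closed if it is real and no proper algebraic extension of it is real. -/
def IsRealClosedField (F : Type) [Field F] : Prop :=
  IsFormallyRealField F ∧
    ∀ (E : Type) [Field E] [Algebra F E], Algebra.IsAlgebraic F E →
      IsFormallyRealField E → Function.Surjective (algebraMap F E)

/-- `L/K`, with derivations `dL` extending `dK`, is a Picard--Vessiot field for `y' = A y`. -/
def IsPicardVessiot {K L : Type} [Field K] [Field L] [Algebra K L]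
    (dK : FieldDeriv K) (dL : FieldDeriv L) {n : ℕ}
    (A : Matrix (Fin n) (Fin n) K) : Prop :=
  (∀ a : K, dL.d (algebraMap K L a) = algebraMap K L (dK.d a)) ∧
  ∃ F : Matrix (Fin n) (Fin n) L, IsUnit F.det ∧
    (∀ i j, dL.d (F i j) = (A.map (algebraMap K L) * F) i j) ∧
    IntermediateField.adjoin K (Set.range fun q : Fin n × Fin n => F q.1 q.2) = ⊤ ∧
    ∀ x : L, dL.d x = 0 → ∃ a : K, dK.d a = 0 ∧ algebraMap K L a = x



section Aux

namespace FieldDeriv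
variable {F : Type} [Field F] (D : FieldDeriv F)

lemma d_zero : D.d 0 = 0 := by
  have := D.map_add 0 0
  simp only [add_zero] at this
  exact (left_eq_add.mp this)

lemma d_one : D.d 1 = 0 := by
  have := D.leibniz 1 1
  simp only [mul_one, one_mul] at this
  exact (left_eq_add.mp this)

lemma d_neg (a : F) : D.d (-a) = - D.d a := by
  have := D.map_add a (-a)
  simp only [add_neg_cancel, D.d_zero] at this
  exact (eq_neg_of_add_eq_zero_right this.symm)

end FieldDeriv

lemma isSumSq_natCast {R : Type*} [Semiring R] (n : ℕ) : IsSumSq (n : R) := by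
  induction n with
  | zero => simpa using IsSumSq.zero
  | succ m ih =>
      have : ((m + 1 : ℕ) : R) = 1 * 1 + (m : R) := by
        rw [Nat.cast_succ, one_mul, add_comm]
      rw [this]; exact IsSumSq.sq_add 1 ih

lemma IsFormallyRealField.charZero {F : Type} [Field F] (h : IsFormallyRealField F) :
    CharZero F := by
  rcases CharP.char_is_prime_or_zero F (ringChar F) with hp | h0
  · exfalso
    apply h
    haveI : CharP F (ringChar F) := ringChar.charP F
    have hcast : ((ringChar F : ℕ) : F) = 0 := CharP.cast_eq_zero F (ringChar F)
    have h2 : 2 ≤ ringChar F := hp.two_le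
    have key : ((ringChar F - 1 : ℕ) : F) = -1 := by
      have h3 : ((ringChar F - 1 : ℕ) : F) + 1 = ((ringChar F : ℕ) : F) := by
        rw [← Nat.cast_succ]
        congr 1
        omega
      rw [hcast] at h3
      exact eq_neg_of_add_eq_zero_left h3
    rw [← key]
    exact isSumSq_natCast _
  · haveI : CharP F 0 := h0 ▸ ringChar.charP F
    exact CharP.charP_to_charZero F


lemma IsSumSq.mul_sq' {R : Type*} [CommSemiring R] {s : R} (h : IsSumSq s) (a : R) :
    IsSumSq (s * (a * a)) := by
  induction h with
  | zero => simpa using IsSumSq.zero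
  | @sq_add x T hT ih =>
      have : (x * x + T) * (a * a) = (x * a) * (x * a) + T * (a * a) := by ring
      rw [this]
      exact IsSumSq.sq_add _ ih

lemma sq_add_sumsq_ne_zero {k : Type} [Field k] (hreal : IsFormallyRealField k)
    {a s : k} (ha : a ≠ 0) (hs : IsSumSq s) : a * a + s ≠ 0 := by
  intro h
  apply hreal
  have key : (-1 : k) = s * (a⁻¹ * a⁻¹) := by
    field_simp
    linear_combination -h
  rw [key]
  exact hs.mul_sq' _

open Polynomial in
lemma sumSq_poly {k : Type} [Field k] (hreal : IsFormallyRealField k)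
    {S : k[X]} (h : IsSumSq S) :
    S = 0 ∨ (Even S.natDegree ∧ IsSumSq S.leadingCoeff ∧ S ≠ 0) := by
  induction h with
  | zero => exact Or.inl rfl
  | @sq_add a S hS ih =>
      by_cases ha : a = 0
      · rcases ih with h0 | h1
        · exact Or.inl (by simp [ha, h0])
        · right; simpa [ha] using h1
      have haa : a * a ≠ 0 := mul_ne_zero ha ha
      have hdeg_aa : (a * a).natDegree = a.natDegree + a.natDegree := natDegree_mul ha ha
      have hlc_aa : (a * a).leadingCoeff = a.leadingCoeff * a.leadingCoeff := leadingCoeff_mul _ _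
      have hlcss : IsSumSq ((a*a).leadingCoeff) := by
        rw [hlc_aa, ← add_zero (a.leadingCoeff * a.leadingCoeff)]
        exact IsSumSq.sq_add _ IsSumSq.zero
      rcases ih with h0 | ⟨hev, hlc, hne⟩
      · right
        subst h0
        rw [add_zero]
        exact ⟨hdeg_aa ▸ ⟨a.natDegree, rfl⟩, hlcss, haa⟩
      right
      rcases lt_trichotomy (a*a).degree S.degree with hlt | heq | hgt
      · have hd : (a*a + S).degree = S.degree := degree_add_eq_right_of_degree_lt hlt
        refine ⟨?_, ?_, ?_⟩
        · rwa [natDegree_eq_of_degree_eq hd]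
        · rwa [leadingCoeff_add_of_degree_lt hlt]
        · intro h0; rw [h0, degree_zero] at hd; exact hne (degree_eq_bot.mp hd.symm)
      · have hlcne : (a*a).leadingCoeff + S.leadingCoeff ≠ 0 := by
          rw [hlc_aa]
          exact sq_add_sumsq_ne_zero hreal (leadingCoeff_ne_zero.mpr ha) hlc
        have hd : (a*a + S).degree = S.degree := by
          rw [degree_add_eq_of_leadingCoeff_add_ne_zero hlcne, heq, max_self]
        refine ⟨?_, ?_, ?_⟩
        · rwa [natDegree_eq_of_degree_eq hd]
        · rw [leadingCoeff_add_of_degree_eq heq hlcne, hlc_aa]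
          exact IsSumSq.sq_add _ hlc
        · intro h0; rw [h0, degree_zero] at hd; exact hne (degree_eq_bot.mp hd.symm)
      · have hd : (a*a + S).degree = (a*a).degree := degree_add_eq_left_of_degree_lt hgt
        refine ⟨?_, ?_, ?_⟩
        · rw [natDegree_eq_of_degree_eq hd, hdeg_aa]; exact ⟨a.natDegree, rfl⟩
        · rwa [leadingCoeff_add_of_degree_lt' hgt]
        · intro h0; rw [h0, degree_zero] at hd; exact haa (degree_eq_bot.mp hd.symm)

open Polynomial in
lemma poly_sq_add_sumsq_ne_zero {k : Type} [Field k] (hreal : IsFormallyRealField k)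
    {a S : k[X]} (ha : a ≠ 0) (hS : IsSumSq S) : a * a + S ≠ 0 := by
  intro h
  rcases sumSq_poly hreal hS with h0 | ⟨_, hlc, _⟩
  · rw [h0, add_zero] at h; exact (mul_ne_zero ha ha) h
  · have hSeq : S = -(a*a) := by linear_combination h
    have : S.leadingCoeff = -(a.leadingCoeff * a.leadingCoeff) := by
      rw [hSeq, leadingCoeff_neg, leadingCoeff_mul]
    exact sq_add_sumsq_ne_zero hreal (leadingCoeff_ne_zero.mpr ha) hlc (by rw [this]; ring)


section

open Polynomial

variable {k : Type} [Field k]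

lemma deriv_poly (dK : FieldDeriv (RatFunc k))
    (hdC : ∀ c : k, dK.d (algebraMap k (RatFunc k) c) = 0)
    (hdX : dK.d RatFunc.X = 1) (p : k[X]) :
    dK.d (algebraMap k[X] (RatFunc k) p) = algebraMap k[X] (RatFunc k) (derivative p) := by
  induction p using Polynomial.induction_on with
  | C a =>
      rw [RatFunc.algebraMap_C, derivative_C, map_zero, ← RatFunc.algebraMap_eq_C]
      exact hdC a
  | add p q hp hq =>
      rw [map_add, dK.map_add, hp, hq, derivative_add, map_add]
  | monomial n a ih =>
      have hsplit : (C a * X ^ (n + 1) : k[X]) = (C a * X ^ n) * X := by ring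
      rw [hsplit, map_mul, dK.leibniz, ih, RatFunc.algebraMap_X, hdX, mul_one,
        ← RatFunc.algebraMap_X, ← map_mul, ← map_add]
      congr 1
      rw [← hsplit, derivative_C_mul_X_pow, derivative_C_mul_X_pow]
      cases n with
      | zero => simp
      | succ m =>
          simp only [Nat.add_sub_cancel, Nat.cast_add, Nat.cast_one, C_add, C_mul, C_1]
          ring


lemma clear_denom (f : RatFunc k) :
    f * algebraMap k[X] (RatFunc k) f.denom = algebraMap k[X] (RatFunc k) f.num := by
  have h := RatFunc.num_div_denom f
  rw [div_eq_iff (RatFunc.algebraMap_ne_zero f.denom_ne_zero)] at h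
  linear_combination -h

lemma sq_deg {f : RatFunc k} (hf : f ≠ 0) {u v : k[X]} (hu : u ≠ 0) (hv : v ≠ 0)
    (h : f ^ 2 * algebraMap k[X] (RatFunc k) u = algebraMap k[X] (RatFunc k) v) :
    2 * f.num.natDegree + u.natDegree = v.natDegree + 2 * f.denom.natDegree := by
  set ψ := algebraMap k[X] (RatFunc k)
  have hkey : ψ (f.num ^ 2 * u) = ψ (v * f.denom ^ 2) := by
    rw [map_mul, map_mul, map_pow, map_pow, ← clear_denom f]
    ring_nf
    linear_combination (ψ f.denom)^2 * h
  have heq : f.num ^ 2 * u = v * f.denom ^ 2 := RatFunc.algebraMap_injective k hkey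
  have hnum : f.num ≠ 0 := RatFunc.num_ne_zero hf
  have := congrArg natDegree heq
  rwa [natDegree_mul (pow_ne_zero 2 hnum) hu, natDegree_mul hv (pow_ne_zero 2 f.denom_ne_zero),
    natDegree_pow, natDegree_pow] at this

lemma constA [CharZero k] (dK : FieldDeriv (RatFunc k))
    (hdC : ∀ c : k, dK.d (algebraMap k (RatFunc k) c) = 0)
    (hdX : dK.d RatFunc.X = 1) {f : RatFunc k} (h : dK.d f = 0) :
    ∃ c : k, f = algebraMap k (RatFunc k) c := by
  set ψ := algebraMap k[X] (RatFunc k) with hψ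
  have hrel : f * ψ f.denom = ψ f.num := clear_denom f
  have h2 : f * ψ (derivative f.denom) = ψ (derivative f.num) := by
    have := congrArg dK.d hrel
    rwa [dK.leibniz, h, zero_mul, add_zero, deriv_poly dK hdC hdX, deriv_poly dK hdC hdX]
      at this
  have h3 : f.num * derivative f.denom = derivative f.num * f.denom := by
    apply RatFunc.algebraMap_injective k
    rw [map_mul, map_mul, ← hrel, ← hψ]
    ring_nf
    linear_combination ψ f.denom * h2
  have hdvd : f.denom ∣ f.num * derivative f.denom := ⟨derivative f.num, h3.symm ▸ by ring⟩
  have hq' : derivative f.denom = 0 := by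
    by_contra hne
    have hle := Polynomial.degree_le_of_dvd
      ((RatFunc.isCoprime_num_denom f).symm.dvd_of_dvd_mul_left hdvd) hne
    exact absurd hle (not_le.mpr (Polynomial.degree_derivative_lt f.denom_ne_zero))
  have hq1 : f.denom = 1 := by
    have h0 : f.denom.natDegree = 0 := natDegree_eq_zero_of_derivative_eq_zero hq'
    have := Polynomial.eq_C_of_natDegree_eq_zero h0
    have hm := RatFunc.monic_denom f
    rw [Polynomial.Monic, Polynomial.leadingCoeff, h0] at hm
    rw [this, hm, map_one]
  have hf : f = ψ f.num := by rw [← hrel, hq1, map_one, mul_one]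
  have hp' : derivative f.num = 0 := by
    have := h2
    rw [hq1] at this
    simp only [derivative_one, map_zero, mul_zero] at this
    exact (map_eq_zero_iff ψ (RatFunc.algebraMap_injective k)).mp this.symm
  have hp0 : f.num.natDegree = 0 := natDegree_eq_zero_of_derivative_eq_zero hp'
  have hC : f.num = C (f.num.coeff 0) := Polynomial.eq_C_of_natDegree_eq_zero hp0
  refine ⟨f.num.coeff 0, ?_⟩
  conv_lhs => rw [hf, hC]
  simp [hψ, RatFunc.algebraMap_C, RatFunc.algebraMap_eq_C]

lemma constB [CharZero k] (dK : FieldDeriv (RatFunc k))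
    (hdC : ∀ c : k, dK.d (algebraMap k (RatFunc k) c) = 0)
    (hdX : dK.d RatFunc.X = 1) {b : RatFunc k}
    (h : dK.d b * (2 * RatFunc.X) + b = 0) : b = 0 := by
  by_contra hb
  have hdc : dK.d (b * b * RatFunc.X) = 0 := by
    rw [dK.leibniz (b*b) RatFunc.X, dK.leibniz b b, hdX, mul_one]
    linear_combination b * h
  obtain ⟨c, hc⟩ := constA dK hdC hdX hdc
  have hbbX : b * b * RatFunc.X ≠ 0 :=
    mul_ne_zero (mul_ne_zero hb hb) RatFunc.X_ne_zero
  have hcne : (C c : k[X]) ≠ 0 := by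
    intro h0
    rw [Polynomial.C_eq_zero] at h0
    rw [h0, map_zero] at hc
    exact hbbX hc
  have hkey : b ^ 2 * algebraMap k[X] (RatFunc k) X = algebraMap k[X] (RatFunc k) (C c) := by
    rw [RatFunc.algebraMap_X, sq, hc, RatFunc.algebraMap_eq_C, RatFunc.algebraMap_C]
  have := sq_deg hb X_ne_zero hcne hkey
  rw [natDegree_X, natDegree_C] at this
  omega


lemma main_aux {k : Type} [Field k] (hreal : IsFormallyRealField k)
    (dK : FieldDeriv (RatFunc k))
    (hdC : ∀ c : k, dK.d (algebraMap k (RatFunc k) c) = 0)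
    (hdX : dK.d RatFunc.X = 1)
    (L : Type) [Field L] [Algebra (RatFunc k) L] (t : L) (e : k[X])
    (he : e = X ∨ e = -X)
    (ht : t ^ 2 = algebraMap (RatFunc k) L (algebraMap k[X] (RatFunc k) e))
    (hgen : IntermediateField.adjoin (RatFunc k) ({t} : Set L) = ⊤)
    (dL : FieldDeriv L)
    (hd : ∀ a : RatFunc k, dL.d (algebraMap (RatFunc k) L a)
      = algebraMap (RatFunc k) L (dK.d a)) :
    IsPicardVessiot dK dL (Matrix.of fun _ _ : Fin 1 => (2 * RatFunc.X : RatFunc k)⁻¹) ∧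
      IsFormallyRealField L := by
  haveI : CharZero k := hreal.charZero
  haveI : CharZero (RatFunc k) :=
    charZero_of_injective_algebraMap (algebraMap k (RatFunc k)).injective
  set φ := algebraMap (RatFunc k) L with hφdef
  set ψ := algebraMap k[X] (RatFunc k) with hψdef
  have hφinj : Function.Injective φ := (algebraMap (RatFunc k) L).injective
  have hene : e ≠ 0 := by
    rcases he with rfl | rfl
    · exact X_ne_zero
    · exact neg_ne_zero.mpr X_ne_zero
  have hedeg : e.natDegree = 1 := by rcases he with rfl | rfl <;> simp
  have hψe : ψ e ≠ 0 := RatFunc.algebraMap_ne_zero hene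
  have htne : t ≠ 0 := by
    intro h0
    apply hφinj.ne (a₁ := ψ e) (a₂ := 0) hψe
    rw [map_zero, ← ht, h0]
    ring
  have h2X : (2 * RatFunc.X : RatFunc k) ≠ 0 := mul_ne_zero two_ne_zero RatFunc.X_ne_zero
  have htt : t * t = φ (ψ e) := by rw [← sq, ht]
  haveI : CharZero L := charZero_of_injective_algebraMap hφinj
  -- derivative of t
  have hdt : dL.d t = φ ((2 * RatFunc.X)⁻¹) * t := by
    have h2t : (2 : L) * t ≠ 0 := mul_ne_zero two_ne_zero htne
    · apply mul_left_cancel₀ h2t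
      have hick : (2:L) * t * dL.d t = dL.d (t * t) := by
        rw [dL.leibniz t t]; ring
      have key : (2 : RatFunc k) * ψ e * (2 * RatFunc.X)⁻¹ = ψ (derivative e) := by
        rcases he with rfl | rfl
        · rw [derivative_X, map_one, hψdef, RatFunc.algebraMap_X]
          field_simp
          exact div_self RatFunc.X_ne_zero
        · rw [derivative_neg, derivative_X, map_neg, map_neg, map_one, hψdef,
            RatFunc.algebraMap_X]
          field_simp
          rw [div_self RatFunc.X_ne_zero]
      rw [hick, htt, hd, deriv_poly dK hdC hdX, ← key, map_mul, map_mul, map_ofNat]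
      linear_combination (-2 * φ ((2 * RatFunc.X)⁻¹)) * htt
  -- decomposition
  have hdecomp : ∀ x : L, ∃ a b : RatFunc k, x = φ a + φ b * t := by
    have hint : IsIntegral (RatFunc k) t := by
      refine ⟨X ^ 2 - C (ψ e), monic_X_pow_sub_C _ two_ne_zero, ?_⟩
      simp only [eval₂_sub, eval₂_pow, eval₂_X, eval₂_C, ht]
      exact sub_self _
    have halg : Algebra.adjoin (RatFunc k) ({t} : Set L) = ⊤ := by
      rw [← IntermediateField.adjoin_simple_toSubalgebra_of_isAlgebraic hint.isAlgebraic]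
      rw [show IntermediateField.adjoin (RatFunc k) ({t} : Set L) = ⊤ from hgen]
      rfl
    intro x
    have hx : x ∈ Algebra.adjoin (RatFunc k) ({t} : Set L) := halg ▸ Algebra.mem_top
    rw [Algebra.adjoin_singleton_eq_range_aeval] at hx
    obtain ⟨P, hP⟩ := hx
    have hP' : aeval t P = x := hP
    set m : (RatFunc k)[X] := X ^ 2 - C (ψ e) with hm
    have hmon : m.Monic := monic_X_pow_sub_C _ two_ne_zero
    have hmt : aeval t m = 0 := by
      simp only [hm, map_sub, map_pow, aeval_X, aeval_C, ht]
      exact sub_self _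
    have hx2 : x = aeval t (P %ₘ m) := by
      conv_lhs => rw [← hP']
      conv_lhs => rw [← modByMonic_add_div P m]
      rw [map_add, map_mul, hmt, zero_mul, add_zero]
    have hdeg : (P %ₘ m).natDegree ≤ 1 := by
      by_cases h0 : P %ₘ m = 0
      · simp [h0]
      · have hlt : (P %ₘ m).degree < m.degree := degree_modByMonic_lt P hmon
        rw [hm, degree_X_pow_sub_C (by norm_num)] at hlt
        have := (natDegree_lt_iff_degree_lt h0).mpr hlt
        omega
    have hform := eq_X_add_C_of_natDegree_le_one hdeg
    refine ⟨(P %ₘ m).coeff 0, (P %ₘ m).coeff 1, ?_⟩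
    have : aeval t (P %ₘ m) = φ ((P %ₘ m).coeff 0) + φ ((P %ₘ m).coeff 1) * t := by
      conv_lhs => rw [hform]
      rw [map_add, map_mul, aeval_C, aeval_C, aeval_X]
      ring
    rw [hx2, this]
  -- independence
  have hindep : ∀ a b : RatFunc k, φ a + φ b * t = 0 → a = 0 ∧ b = 0 := by
    intro a b hab
    by_cases hb : b = 0
    · refine ⟨?_, hb⟩
      rw [hb, map_zero, zero_mul, add_zero] at hab
      exact hφinj (by rw [hab, map_zero])
    · exfalso
      have hφb : φ b ≠ 0 := fun h0 => hb (hφinj (by rw [h0, map_zero]))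
      have htval : t * φ b = - φ a := by linear_combination hab
      have hcsq : (a / b) ^ 2 = ψ e := by
        apply hφinj
        rw [map_pow, map_div₀, ← ht, div_pow, div_eq_iff (pow_ne_zero 2 hφb)]
        linear_combination (φ a - t * φ b) * htval
      have hc : a / b ≠ 0 := by
        intro h0
        rw [h0] at hcsq
        exact hψe (by rw [← hcsq]; ring)
      have hkey : (a / b) ^ 2 * ψ (1 : k[X]) = ψ e := by rw [map_one, mul_one, hcsq]
      have := sq_deg hc one_ne_zero hene hkey
      rw [natDegree_one, hedeg] at this
      omega
  constructor
  · refine ⟨hd, Matrix.of (fun _ _ => t), ?_, ?_, ?_, ?_⟩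
    · rw [Matrix.det_fin_one]
      exact isUnit_iff_ne_zero.mpr htne
    · intro i j
      rw [Matrix.mul_apply]
      simp only [Matrix.map_apply, Matrix.of_apply, Fin.sum_univ_one]
      exact hdt
    · rw [show (Set.range fun q : Fin 1 × Fin 1 =>
          Matrix.of (fun _ _ : Fin 1 => t) q.1 q.2) = {t} from Set.range_const]
      exact hgen
    · intro x hx
      obtain ⟨a, b, hxab⟩ := hdecomp x
      rw [hxab, dL.map_add, dL.leibniz, hd, hd, hdt] at hx
      have hx2 : φ (dK.d a) + φ (dK.d b + b * (2 * RatFunc.X)⁻¹) * t = 0 := by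
        rw [map_add, map_mul]
        linear_combination hx
      obtain ⟨ha0, hb0⟩ := hindep _ _ hx2
      have hbz : b = 0 := by
        apply constB dK hdC hdX
        have : (dK.d b + b * (2 * RatFunc.X)⁻¹) * (2 * RatFunc.X) = 0 := by
          rw [hb0]; ring
        field_simp at this
        linear_combination this - b * mul_inv_cancel₀ (RatFunc.X_ne_zero : (RatFunc.X : RatFunc k) ≠ 0)
      refine ⟨a, ha0, ?_⟩
      rw [hxab, hbz, map_zero, zero_mul, add_zero]
  · -- formally real
    intro hss
    set Q : L → Prop := fun s => ∃ a b : RatFunc k, s = φ a + φ b * t ∧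
      ∃ A B q : k[X], q ≠ 0 ∧ IsSumSq A ∧ IsSumSq B ∧
        a * ψ q ^ 2 = ψ A + ψ e * ψ B with hQ
    have key : ∀ s : L, IsSumSq s → Q s := by
      intro s h
      induction h with
      | zero =>
          exact ⟨0, 0, by simp, 0, 0, 1, one_ne_zero, IsSumSq.zero, IsSumSq.zero, by simp⟩
      | @sq_add x s hs ih =>
          obtain ⟨a, b, hsab, A, B, q, hq, hA, hB, hrel⟩ := ih
          obtain ⟨c, d, hxcd⟩ := hdecomp x
          have hc1 : c * ψ c.denom = ψ c.num := clear_denom c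
          have hd1 : d * ψ d.denom = ψ d.num := clear_denom d
          refine ⟨c * c + d * d * ψ e + a, c * d + d * c + b, ?_, ?_⟩
          · rw [hxcd, hsab]
            simp only [map_add, map_mul]
            linear_combination (φ d * φ d) * htt
          · refine ⟨(c.num * q * d.denom) * (c.num * q * d.denom)
              + A * ((c.denom * d.denom) * (c.denom * d.denom)),
              (d.num * q * c.denom) * (d.num * q * c.denom)
              + B * ((c.denom * d.denom) * (c.denom * d.denom)),
              q * c.denom * d.denom,
              mul_ne_zero (mul_ne_zero hq c.denom_ne_zero) d.denom_ne_zero,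
              IsSumSq.sq_add _ (hA.mul_sq' _), IsSumSq.sq_add _ (hB.mul_sq' _), ?_⟩
            simp only [map_add, map_mul]
            linear_combination (c * ψ c.denom + ψ c.num) * ψ d.denom^2 * ψ q^2 * hc1
              + (d * ψ d.denom + ψ d.num) * ψ c.denom^2 * ψ q^2 * (ψ e) * hd1
              + ψ c.denom^2 * ψ d.denom^2 * hrel
    obtain ⟨a, b, hab, A, B, q, hq, hA, hB, hrel⟩ := key (-1) hss
    have hzero : φ (a + 1) + φ b * t = 0 := by
      rw [map_add, map_one]
      linear_combination -hab
    obtain ⟨ha1, hb0⟩ := hindep _ _ hzero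
    have ha : a = -1 := by linear_combination ha1
    have E : A + e * B + q * q = 0 := by
      apply RatFunc.algebraMap_injective k
      simp only [map_add, map_mul, map_zero]
      rw [ha] at hrel
      linear_combination -hrel
    by_cases hB0 : B = 0
    · rw [hB0, mul_zero, add_zero] at E
      exact poly_sq_add_sumsq_ne_zero hreal hq hA (by linear_combination E)
    · have hS : q * q + A ≠ 0 := poly_sq_add_sumsq_ne_zero hreal hq hA
      have hSsum : IsSumSq (q * q + A) := IsSumSq.sq_add q hA
      rcases sumSq_poly hreal hSsum with h0 | ⟨hev, _, _⟩
      · exact hS h0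
      rcases sumSq_poly hreal hB with h0 | ⟨hevB, _, _⟩
      · exact hB0 h0
      have hEB : e * B = -(q * q + A) := by linear_combination E
      have hdeg2 : (e * B).natDegree = 1 + B.natDegree := by
        rw [natDegree_mul hene hB0, hedeg]
      rw [hEB, natDegree_neg] at hdeg2
      obtain ⟨u, hu⟩ := hev
      obtain ⟨v, hv⟩ := hevB
      omega


end

end Aux

/-- Let `k` be real closed, `K = k(z)` with the derivation `d/dz`
(so the constants of `K` are exactly `k`), and let `L₁ = K(t₁)` with `t₁² = z` and
`L₂ = K(t₂)` with `t₂² = -z`, each with the unique derivation extending that of `K`.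
Then `L₁` and `L₂` are both real Picard--Vessiot fields for `y' = (1/(2z)) y` over `K`. -/
theorem sqrt_z_and_sqrt_neg_z_are_real_picard_vessiot
    (k : Type) [Field k] (hkrc : IsRealClosedField k)
    (dK : FieldDeriv (RatFunc k))
    (hdC : ∀ c : k, dK.d (algebraMap k (RatFunc k) c) = 0)
    (hdX : dK.d RatFunc.X = 1)
    (L₁ L₂ : Type) [Field L₁] [Field L₂]
    [Algebra (RatFunc k) L₁] [Algebra (RatFunc k) L₂]
    (t₁ : L₁) (t₂ : L₂)
    (ht₁ : t₁ ^ 2 = algebraMap (RatFunc k) L₁ RatFunc.X)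
    (ht₂ : t₂ ^ 2 = - algebraMap (RatFunc k) L₂ RatFunc.X)
    (hgen₁ : IntermediateField.adjoin (RatFunc k) ({t₁} : Set L₁) = ⊤)
    (hgen₂ : IntermediateField.adjoin (RatFunc k) ({t₂} : Set L₂) = ⊤)
    (d₁ : FieldDeriv L₁) (d₂ : FieldDeriv L₂)
    (hd₁ : ∀ a : RatFunc k, d₁.d (algebraMap (RatFunc k) L₁ a)
      = algebraMap (RatFunc k) L₁ (dK.d a))
    (hd₂ : ∀ a : RatFunc k, d₂.d (algebraMap (RatFunc k) L₂ a)
      = algebraMap (RatFunc k) L₂ (dK.d a)) :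
    (IsPicardVessiot dK d₁
        (Matrix.of fun _ _ : Fin 1 => (2 * RatFunc.X : RatFunc k)⁻¹) ∧
      IsFormallyRealField L₁) ∧
    (IsPicardVessiot dK d₂
        (Matrix.of fun _ _ : Fin 1 => (2 * RatFunc.X : RatFunc k)⁻¹) ∧
      IsFormallyRealField L₂) := by
  have hreal := hkrc.1
  constructor
  · exact main_aux hreal dK hdC hdX L₁ t₁ Polynomial.X (Or.inl rfl)
      (by rw [RatFunc.algebraMap_X]; exact ht₁) hgen₁ d₁ hd₁
  · exact main_aux hreal dK hdC hdX L₂ t₂ (-Polynomial.X) (Or.inr rfl)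
      (by rw [show (algebraMap (Polynomial k) (RatFunc k)) (-Polynomial.X) = -RatFunc.X by
            rw [map_neg, RatFunc.algebraMap_X], map_neg]
          exact ht₂) hgen₂ d₂ hd₂
end

section
/- Let K̃ ⊇ K be an extension of real differential fields (the derivation of K̃ extending that of K) such that the field of constants of K̃ equals the field of constants k of K, and let A ∈ Mat_n(K). If the equation y′ = Ay has a real Picard–Vessiot field over K̃, then y′ = Ay has a real Picard–Vessiot field over K. -/
/-- Sums of squares are preserved by ring homomorphisms. -/
theorem isSumSq_ringHom_map {R S : Type*} [CommRing R] [CommRing S] (f : R →+* S) {a : R}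
    (h : IsSumSq a) : IsSumSq (f a) := by
  induction h with
  | zero => simpa using IsSumSq.zero
  | @sq_add b T pT ih => simpa [map_add, map_mul] using IsSumSq.sq_add (f b) ih

set_option maxHeartbeats 1000000 in
/-- Let `K̃ ⊇ K` be an extension of real differential fields with the same
field of constants.  If `y' = A y` (with `A` over `K`) has a real Picard--Vessiot field
over `K̃`, then it has a real Picard--Vessiot field over `K`. -/
theorem real_picard_vessiot_descends
    (K Kt : Type) [Field K] [Field Kt] [CharZero K] [CharZero Kt] [Algebra K Kt]
    (dK : FieldDeriv K) (dKt : FieldDeriv Kt)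
    (hext : ∀ a : K, dKt.d (algebraMap K Kt a) = algebraMap K Kt (dK.d a))
    (hKreal : IsFormallyRealField K) (hKtreal : IsFormallyRealField Kt)
    -- the field of constants of `K̃` equals the field of constants `k` of `K`
    (hconst : ∀ x : Kt, dKt.d x = 0 → ∃ a : K, dK.d a = 0 ∧ algebraMap K Kt a = x)
    (n : ℕ) (A : Matrix (Fin n) (Fin n) K)
    (hex : ∃ (L : Type) (_ : Field L) (_ : Algebra Kt L) (dL : FieldDeriv L),
      IsPicardVessiot dKt dL (A.map (algebraMap K Kt)) ∧ IsFormallyRealField L) :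
    ∃ (L : Type) (_ : Field L) (_ : Algebra K L) (dL : FieldDeriv L),
      IsPicardVessiot dK dL A ∧ IsFormallyRealField L := by
  obtain ⟨L, _, _, dL, ⟨hextL, F, hFdet, hFde, hFgen, hFconst⟩, hLreal⟩ := hex
  letI : Algebra K L := ((algebraMap Kt L).comp (algebraMap K Kt)).toAlgebra
  have halg : ∀ a : K, algebraMap K L a = algebraMap Kt L (algebraMap K Kt a) := fun _ => rfl
  have hdKL : ∀ a : K, dL.d (algebraMap K L a) = algebraMap K L (dK.d a) := by
    intro a; rw [halg, hextL, hext, halg]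
  -- basic derivation facts
  have d0 : dL.d 0 = 0 := by
    have h := dL.map_add 0 0
    rw [add_zero] at h
    exact (left_eq_add.mp h)
  have dinv : ∀ x : L, x ≠ 0 → dL.d x⁻¹ = -(dL.d x * x⁻¹ * x⁻¹) := by
    intro x hx
    have d1 : dL.d 1 = 0 := by
      have h := dL.leibniz 1 1
      rw [mul_one, one_mul, mul_one] at h
      exact (left_eq_add.mp h)
    have h := dL.leibniz x x⁻¹
    rw [mul_inv_cancel₀ hx, d1] at h
    have h2 : x * (dL.d x⁻¹ + dL.d x * x⁻¹ * x⁻¹) = 0 := by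
      have hxx : x * (dL.d x * x⁻¹ * x⁻¹) = dL.d x * x⁻¹ := by
        field_simp
      rw [mul_add, hxx]
      exact h.symm
    have h3 := (mul_eq_zero.mp h2).resolve_left hx
    linear_combination h3
  -- the explicit derivative of the entries of F, over K
  have hFd' : ∀ i j, dL.d (F i j) =
      ∑ k, algebraMap K L (A i k) * F k j := by
    intro i j
    rw [hFde i j]
    simp [Matrix.mul_apply, Matrix.map_apply, halg]
  set Mset : Set L := Set.range fun q : Fin n × Fin n => F q.1 q.2 with hMset
  set M : IntermediateField K L := IntermediateField.adjoin K Mset with hM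
  have hFmem : ∀ i j, F i j ∈ M := fun i j =>
    IntermediateField.subset_adjoin _ _ ⟨(i, j), rfl⟩
  -- M is closed under the derivation
  have d1 : dL.d 1 = 0 := by
    have h := dL.leibniz 1 1
    rw [mul_one, one_mul, mul_one] at h
    exact (left_eq_add.mp h)
  -- the subfield of elements of M whose derivative is also in M
  let S : IntermediateField K L :=
    { carrier := {x | x ∈ M ∧ dL.d x ∈ M}
      mul_mem' := fun {a b} ha hb =>
        ⟨mul_mem ha.1 hb.1, by
          rw [dL.leibniz]
          exact add_mem (mul_mem ha.1 hb.2) (mul_mem ha.2 hb.1)⟩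
      one_mem' := ⟨one_mem M, by rw [d1]; exact zero_mem M⟩
      add_mem' := fun {a b} ha hb =>
        ⟨add_mem ha.1 hb.1, by
          rw [dL.map_add]
          exact add_mem ha.2 hb.2⟩
      zero_mem' := ⟨zero_mem M, by rw [d0]; exact zero_mem M⟩
      algebraMap_mem' := fun a =>
        ⟨IntermediateField.algebraMap_mem M a, by
          rw [hdKL]
          exact IntermediateField.algebraMap_mem M _⟩
      inv_mem' := fun a ha => by
        by_cases h0 : a = 0
        · refine ⟨?_, ?_⟩ <;> simp [h0, d0, zero_mem M]
        · exact ⟨inv_mem ha.1, by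
            rw [dinv a h0]
            exact neg_mem (mul_mem (mul_mem ha.2 (inv_mem ha.1)) (inv_mem ha.1))⟩ }
  have hMS : M ≤ S := by
    rw [hM]
    apply IntermediateField.adjoin_le_iff.mpr
    rintro y ⟨⟨i, j⟩, rfl⟩
    refine ⟨hFmem i j, ?_⟩
    rw [hFd' i j]
    exact sum_mem fun k _ =>
      mul_mem (IntermediateField.algebraMap_mem M _) (hFmem k j)
  have hMd : ∀ x ∈ M, dL.d x ∈ M := fun x hx => (hMS hx).2
  -- derivation on M
  let dM : FieldDeriv M :=
    { d := fun x => ⟨dL.d x.1, hMd _ x.2⟩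
      map_add := fun a b => Subtype.ext (by exact dL.map_add a.1 b.1)
      leibniz := fun a b => Subtype.ext (by exact dL.leibniz a.1 b.1) }
  refine ⟨M, inferInstance, inferInstance, dM, ⟨?_, ?_⟩, ?_⟩
  · intro a
    exact Subtype.ext (hdKL a)
  · -- the fundamental matrix with entries in M
    set FM : Matrix (Fin n) (Fin n) M := fun i j => ⟨F i j, hFmem i j⟩ with hFM
    refine ⟨FM, ?_, ?_, ?_, ?_⟩
    · -- determinant is a unit
      have hFmap : M.val.toRingHom.mapMatrix FM = F := by
        ext i j
        rfl
      have hdet : M.val.toRingHom FM.det = F.det := by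
        rw [RingHom.map_det, hFmap]
      rw [isUnit_iff_ne_zero]
      intro h
      rw [isUnit_iff_ne_zero] at hFdet
      apply hFdet
      rw [← hdet, h, map_zero]
    · intro i j
      apply Subtype.ext
      have : (((A.map (algebraMap K M) * FM) i j : M) : L) =
          ∑ k, algebraMap K L (A i k) * F k j := by
        push_cast [Matrix.mul_apply, Matrix.map_apply]
        rfl
      rw [this]
      exact hFd' i j
    · -- generation
      apply IntermediateField.map_injective M.val
      rw [IntermediateField.adjoin_map, ← AlgHom.fieldRange_eq_map,
        IntermediateField.fieldRange_val]
      have himg : (M.val '' Set.range fun q : Fin n × Fin n => FM q.1 q.2) = Mset := by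
        rw [← Set.range_comp]
        rfl
      rw [himg, ← hM]
    · -- constants
      intro x hx
      have hx' : dL.d x.1 = 0 := congrArg Subtype.val hx
      obtain ⟨a, ha0, ha⟩ := hFconst x.1 hx'
      obtain ⟨b, hb0, hb⟩ := hconst a ha0
      refine ⟨b, hb0, ?_⟩
      apply Subtype.ext
      rw [IntermediateField.coe_algebraMap_apply, halg, hb, ha]
  · -- M is formally real
    intro h
    apply hLreal
    have := isSumSq_ringHom_map M.val.toRingHom h
    simpa using this
end

section
/- Fix a prime p. Let K̃ ⊇ K be an extension of p-adic differential fields (the derivation of K̃ extending that of K) such that the field of constants of K̃ equals the field of constants k of K, and let A ∈ Mat_n(K). If the equation y′ = Ay has a p-adic Picard–Vessiot field over K̃, then y′ = Ay has a p-adic Picard–Vessiot field over K. -/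
set_option maxHeartbeats 1000000

/-- A valuation subring `O` of `F` witnesses that `F` is a p-adic field if `pO` is the
maximal ideal of `O` and `O/pO ≅ 𝔽_p`. -/
def PAdicWitness (p : ℕ) {F : Type} [Field F] (O : ValuationSubring F) : Prop :=
  (Ideal.span {(p : O)}).IsMaximal ∧
    Nonempty ((O ⧸ (Ideal.span {(p : O)} : Ideal O)) ≃+* ZMod p)

/-- A field is p-adic if it admits a valuation subring witnessing this. -/
def IsPAdicField (p : ℕ) (F : Type) [Field F] : Prop :=
  ∃ O : ValuationSubring F, PAdicWitness p O

/-- Let `K̃ ⊇ K` be an extension of p-adic differential fields with the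
same field of constants.  If `y' = A y` (with `A` over `K`) has a p-adic Picard--Vessiot
field over `K̃`, then it has a p-adic Picard--Vessiot field over `K`. -/
theorem padic_picard_vessiot_descends
    (p : ℕ) (hp : p.Prime)
    (K Kt : Type) [Field K] [Field Kt] [CharZero K] [CharZero Kt] [Algebra K Kt]
    (dK : FieldDeriv K) (dKt : FieldDeriv Kt)
    (hext : ∀ a : K, dKt.d (algebraMap K Kt a) = algebraMap K Kt (dK.d a))
    (hKpadic : IsPAdicField p K) (hKtpadic : IsPAdicField p Kt)
    -- the field of constants of `K̃` equals the field of constants `k` of `K`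
    (hconst : ∀ x : Kt, dKt.d x = 0 → ∃ a : K, dK.d a = 0 ∧ algebraMap K Kt a = x)
    (n : ℕ) (A : Matrix (Fin n) (Fin n) K)
    (hex : ∃ (L : Type) (_ : Field L) (_ : Algebra Kt L) (dL : FieldDeriv L),
      IsPicardVessiot dKt dL (A.map (algebraMap K Kt)) ∧ IsPAdicField p L) :
    ∃ (L : Type) (_ : Field L) (_ : Algebra K L) (dL : FieldDeriv L),
      IsPicardVessiot dK dL A ∧ IsPAdicField p L := by
  classical
  obtain ⟨L, _, _, dL, ⟨hdext, F, hFdet, hFde, -, hLconst⟩, O, hOmax, ⟨e⟩⟩ := hex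
  haveI : Fact p.Prime := ⟨hp⟩
  haveI : NeZero p := ⟨hp.ne_zero⟩
  letI : Algebra K L := ((algebraMap Kt L).comp (algebraMap K Kt)).toAlgebra
  have halg : ∀ a : K, algebraMap K L a = algebraMap Kt L (algebraMap K Kt a) := fun _ => rfl
  haveI : CharZero L := charZero_of_injective_algebraMap (algebraMap Kt L).injective
  have hpL : (p : L) ≠ 0 := Nat.cast_ne_zero.mpr hp.ne_zero
  -- basic derivation lemmas
  have hd0 : dL.d 0 = 0 := by
    have h := dL.map_add 0 0
    rw [add_zero] at h
    exact add_eq_left.mp h.symm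
  have hd1 : dL.d 1 = 0 := by
    have h := dL.leibniz 1 1
    rw [mul_one, one_mul, mul_one] at h
    exact add_eq_left.mp h.symm
  have hdalg : ∀ a : K, dL.d (algebraMap K L a) = algebraMap K L (dK.d a) := by
    intro a
    rw [halg, hdext, hext, halg]
  -- the subfield generated by the fundamental matrix
  set S : Set L := Set.range fun q : Fin n × Fin n => F q.1 q.2 with hSdef
  have hFmem : ∀ i j, F i j ∈ IntermediateField.adjoin K S :=
    fun i j => IntermediateField.subset_adjoin _ _ ⟨(i, j), rfl⟩
  have hFde' : ∀ i j, dL.d (F i j) = ∑ k, algebraMap K L (A i k) * F k j := by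
    intro i j
    rw [hFde]
    simp [Matrix.mul_apply, Matrix.map_apply, halg]
  have hdFmem : ∀ i j, dL.d (F i j) ∈ IntermediateField.adjoin K S := by
    intro i j
    rw [hFde']
    exact sum_mem fun k _ =>
      mul_mem (IntermediateField.algebraMap_mem _ _) (hFmem k j)
  -- the adjoin is closed under the derivation
  let T : IntermediateField K L :=
    { carrier := {x : L | x ∈ IntermediateField.adjoin K S ∧
        dL.d x ∈ IntermediateField.adjoin K S}
      mul_mem' := fun {a b} ha hb => ⟨mul_mem ha.1 hb.1, by
        rw [dL.leibniz]
        exact add_mem (mul_mem ha.1 hb.2) (mul_mem ha.2 hb.1)⟩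
      one_mem' := ⟨one_mem _, by rw [hd1]; exact zero_mem _⟩
      add_mem' := fun {a b} ha hb => ⟨add_mem ha.1 hb.1, by
        rw [dL.map_add]; exact add_mem ha.2 hb.2⟩
      zero_mem' := ⟨zero_mem _, by rw [hd0]; exact zero_mem _⟩
      algebraMap_mem' := fun a => ⟨IntermediateField.algebraMap_mem _ _, by
        rw [hdalg]; exact IntermediateField.algebraMap_mem _ _⟩
      inv_mem' := by
        intro x hx
        by_cases h0 : x = 0
        · subst h0; simpa using hx
        · refine ⟨inv_mem hx.1, ?_⟩
          have h := dL.leibniz x x⁻¹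
          rw [mul_inv_cancel₀ h0, hd1] at h
          have h2 : x * dL.d x⁻¹ = -(dL.d x * x⁻¹) := eq_neg_of_add_eq_zero_left h.symm
          have h3 : dL.d x⁻¹ = x⁻¹ * -(dL.d x * x⁻¹) := by
            rw [← h2, ← mul_assoc, inv_mul_cancel₀ h0, one_mul]
          rw [h3]
          exact mul_mem (inv_mem hx.1) (neg_mem (mul_mem hx.2 (inv_mem hx.1))) }
  have hsub : IntermediateField.adjoin K S ≤ T := by
    rw [IntermediateField.adjoin_le_iff]
    rintro x ⟨⟨i, j⟩, rfl⟩
    exact ⟨hFmem i j, hdFmem i j⟩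
  have hclosed : ∀ x : L, x ∈ IntermediateField.adjoin K S →
      dL.d x ∈ IntermediateField.adjoin K S := fun x hx => (hsub hx).2
  let F0 : Matrix (Fin n) (Fin n) (IntermediateField.adjoin K S) :=
    fun i j => ⟨F i j, hFmem i j⟩
  have hF0val : F0.map (algebraMap (IntermediateField.adjoin K S) L) = F := by ext i j; rfl
  have hF0det : IsUnit F0.det := by
    rw [isUnit_iff_ne_zero]
    intro h
    apply hFdet.ne_zero
    have h2 : algebraMap (IntermediateField.adjoin K S) L F0.det = 0 := by rw [h, map_zero]
    rwa [RingHom.map_det, RingHom.mapMatrix_apply, hF0val] at h2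
  -- the new differential field
  refine ⟨IntermediateField.adjoin K S, inferInstance, inferInstance,
    { d := fun x => ⟨dL.d x.1, hclosed _ x.2⟩
      map_add := fun a b => Subtype.ext (by simpa using dL.map_add a.1 b.1)
      leibniz := fun a b => Subtype.ext (by simpa using dL.leibniz a.1 b.1) }, ?_, ?_⟩
  · -- Picard--Vessiot conditions
    refine ⟨?_, F0, hF0det, ?_, ?_, ?_⟩
    · intro a
      exact Subtype.ext (by simpa using hdalg a)
    · intro i j
      apply Subtype.ext
      show dL.d (F i j) = _
      rw [hFde']
      push_cast [Matrix.mul_apply, Matrix.map_apply]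
      rfl
    · rw [eq_top_iff]
      rintro ⟨x, hx⟩ -
      induction hx using IntermediateField.adjoin_induction with
      | mem x h =>
        obtain ⟨q, rfl⟩ := h
        exact IntermediateField.subset_adjoin _ _ ⟨q, rfl⟩
      | algebraMap x => exact IntermediateField.algebraMap_mem _ x
      | add x y hx hy ihx ihy => exact add_mem ihx ihy
      | inv x hx ih => exact inv_mem ih
      | mul x y hx hy ihx ihy => exact mul_mem ihx ihy
    · rintro ⟨x, hx⟩ h
      have hx0 : dL.d x = 0 := congrArg Subtype.val h
      obtain ⟨b, hb0, hbx⟩ := hLconst x hx0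
      obtain ⟨a, ha0, hab⟩ := hconst b hb0
      refine ⟨a, ha0, Subtype.ext ?_⟩
      show algebraMap K L a = x
      rw [halg, hab, hbx]
  · -- the p-adic structure descends
    set L₀ := IntermediateField.adjoin K S
    let O' : ValuationSubring L₀ := O.comap (algebraMap L₀ L)
    let φ : O' →+* O :=
      { toFun := fun x => ⟨algebraMap L₀ L x.1, x.2⟩
        map_one' := Subtype.ext (map_one _)
        map_mul' := fun a b => Subtype.ext (map_mul _ _ _)
        map_zero' := Subtype.ext (map_zero _)
        map_add' := fun a b => Subtype.ext (map_add _ _ _) }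
    let ψ : O' →+* ZMod p :=
      e.toRingHom.comp ((Ideal.Quotient.mk (Ideal.span {(p : O)})).comp φ)
    have hψnat : ∀ m : ℕ, ψ (m : O') = (m : ZMod p) := fun m => map_natCast ψ m
    have hker : RingHom.ker ψ = Ideal.span {(p : O')} := by
      apply le_antisymm
      · intro x hx
        have hx' : ψ x = 0 := hx
        have h1 : Ideal.Quotient.mk (Ideal.span {(p : O)}) (φ x) = 0 := by
          apply e.injective
          rw [map_zero]
          exact hx'
        have h2 : φ x ∈ Ideal.span {(p : O)} := (Ideal.Quotient.eq_zero_iff_mem).mp h1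
        obtain ⟨y, hy⟩ := (Ideal.mem_span_singleton).mp h2
        -- in L : ↑↑x = p * ↑y
        have hyL : (algebraMap L₀ L x.1 : L) = (p : L) * (y : L) := by
          have := congrArg (Subtype.val) hy
          exact (by simpa using this : ((φ x : O) : L) = (p : L) * (y : L))
        have hz : (p : L₀)⁻¹ * x.1 ∈ O' := by
          show algebraMap L₀ L ((p : L₀)⁻¹ * x.1) ∈ O
          have : algebraMap L₀ L ((p : L₀)⁻¹ * x.1) = (y : L) := by
            rw [map_mul, map_inv₀, map_natCast, hyL, ← mul_assoc,
              inv_mul_cancel₀ hpL, one_mul]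
          rw [this]
          exact y.2
        have hpL₀ : (p : L₀) ≠ 0 := by
          intro h
          apply hpL
          have := congrArg (algebraMap L₀ L) h
          simpa using this
        refine (Ideal.mem_span_singleton).mpr ⟨⟨(p : L₀)⁻¹ * x.1, hz⟩, Subtype.ext ?_⟩
        have hcoe : (((p : O') * ⟨(p : L₀)⁻¹ * x.1, hz⟩ : O') : L₀)
            = (p : L₀) * ((p : L₀)⁻¹ * x.1) := by
          push_cast
          rfl
        rw [hcoe, ← mul_assoc, mul_inv_cancel₀ hpL₀, one_mul]
      · rw [Ideal.span_le]
        rintro x rfl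
        show ψ (p : O') = 0
        rw [hψnat p]
        exact_mod_cast ZMod.natCast_self p
    have hsurj : Function.Surjective ψ := by
      intro z
      obtain ⟨m, rfl⟩ := ZMod.natCast_zmod_surjective z
      exact ⟨(m : O'), hψnat m⟩
    have equiv : (O' ⧸ (Ideal.span {(p : O')} : Ideal O')) ≃+* ZMod p :=
      (Ideal.quotEquivOfEq hker.symm).trans (RingHom.quotientKerEquivOfSurjective hsurj)
    exact ⟨O', Ideal.Quotient.maximal_of_isField _
      (equiv.toMulEquiv.isField (Field.toIsField (ZMod p))), ⟨equiv⟩⟩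
end

section
/- Let G be a group, σ : G → G a group automorphism with σ ∘ σ = id, and Z a central subgroup of G with σ(Z) = Z such that: (i) the only element z ∈ Z with σ(z) = z is the identity, and (ii) for every x ∈ Z there exists y ∈ Z with x = y⁻¹·σ(y). Let σ̄ denote the automorphism of G/Z induced by σ. Define the cocycle set Z¹(G, σ) = {a ∈ G : a·σ(a) = 1}, with two cocycles a, a′ equivalent if and only if a′ = b⁻¹·a·σ(b) for some b ∈ G; define Z¹(G/Z, σ̄) and its equivalence relation analogously. Then the quotient homomorphism G → G/Z maps Z¹(G, σ) into Z¹(G/Z, σ̄), respects the equivalence relations, and induces a bijection between the set of equivalence classes of Z¹(G, σ) and the set of equivalence classes of Z¹(G/Z, σ̄). -/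
/-- Two 1-cocycles `a, a'` for the two-element group `{1, σ}` with values in `G` are
equivalent iff `a' = b⁻¹ · a · σ(b)` for some `b ∈ G`. -/
def CocycleEquiv {G : Type} [Group G] (σ : G → G) (a a' : G) : Prop :=
  ∃ b : G, a' = b⁻¹ * a * σ b

/-- Let `G` be a group, `σ` an automorphism of `G` of order dividing 2,
and `Z` a central subgroup with `σ(Z) = Z` such that the only `σ`-fixed element of `Z` is
`1` and every element of `Z` has the form `y⁻¹σ(y)` with `y ∈ Z`.  Then the quotient map
`G → G/Z` maps 1-cocycles (`a·σ(a) = 1`) to 1-cocycles, respects cocycle equivalence, and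
induces a bijection `H¹({1,σ}, G) → H¹({1,σ}, G/Z)` on equivalence classes of cocycles. -/
theorem cocycle_classes_bijection_central_quotient
    (G : Type) [Group G] (σ : G ≃* G) (hσ2 : ∀ g : G, σ (σ g) = g)
    (Z : Subgroup G) (hZle : Z ≤ Subgroup.center G) (hZn : Z.Normal)
    (hZσ : ∀ z : G, z ∈ Z ↔ σ z ∈ Z)
    (hfix : ∀ z ∈ Z, σ z = z → z = 1)
    (hsplit : ∀ x ∈ Z, ∃ y ∈ Z, x = y⁻¹ * σ y) :
    let π : G →* G ⧸ Z := QuotientGroup.mk' Z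
    let σb : G ⧸ Z →* G ⧸ Z :=
      QuotientGroup.map Z Z σ.toMonoidHom
        (fun z hz => Subgroup.mem_comap.mpr ((hZσ z).mp hz))
    -- the quotient map sends cocycles to cocycles
    (∀ a : G, a * σ a = 1 → π a * σb (π a) = 1) ∧
    -- it respects the equivalence relations
    (∀ a a' : G, a * σ a = 1 → a' * σ a' = 1 →
      CocycleEquiv (⇑σ) a a' → CocycleEquiv (⇑σb) (π a) (π a')) ∧
    -- induced map on classes is injective
    (∀ a a' : G, a * σ a = 1 → a' * σ a' = 1 →
      CocycleEquiv (⇑σb) (π a) (π a') → CocycleEquiv (⇑σ) a a') ∧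
    -- induced map on classes is surjective
    (∀ c : G ⧸ Z, c * σb c = 1 →
      ∃ a : G, a * σ a = 1 ∧ CocycleEquiv (⇑σb) (π a) c) := by

  intro π σb
  have hπ : ∀ g : G, π g = (g : G ⧸ Z) := fun g => rfl
  have hmap : ∀ g : G, σb (π g) = π (σ g) := fun g => rfl
  have hcomm : ∀ z ∈ Z, ∀ g : G, z * g = g * z := fun z hz g =>
    ((Subgroup.mem_center_iff.mp (hZle hz)) g).symm
  refine ⟨?_, ?_, ?_, ?_⟩
  · intro a ha
    rw [hmap, ← map_mul, ha, map_one]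
  · rintro a a' _ _ ⟨b, rfl⟩
    exact ⟨π b, by simp [hmap]⟩
  · rintro a a' ha ha' ⟨bb, hbb⟩
    obtain ⟨b, rfl⟩ := QuotientGroup.mk'_surjective Z bb
    have h1 : π a' = π (b⁻¹ * a * σ b) := by
      rw [hbb]
      show (π b)⁻¹ * π a * σb (π b) = π (b⁻¹ * a * σ b)
      rw [hmap, map_mul, map_mul, map_inv]
    have hz : a'⁻¹ * (b⁻¹ * a * σ b) ∈ Z := by
      rw [hπ, hπ] at h1
      exact (QuotientGroup.eq).mp h1
    set z : G := a'⁻¹ * (b⁻¹ * a * σ b) with hzdef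
    obtain ⟨y, hy, hyz⟩ := hsplit z⁻¹ (inv_mem hz)
    refine ⟨b * y, ?_⟩
    have hw : a' = (b⁻¹ * a * σ b) * z⁻¹ := by
      rw [hzdef]; group
    rw [hw, hyz, map_mul, mul_inv_rev]
    have hc1 : ∀ g : G, y⁻¹ * g = g * y⁻¹ := fun g => hcomm y⁻¹ (inv_mem hy) g
    calc b⁻¹ * a * σ b * (y⁻¹ * σ y)
        = b⁻¹ * a * (σ b * y⁻¹) * σ y := by group
      _ = b⁻¹ * a * (y⁻¹ * σ b) * σ y := by rw [← hc1 (σ b)]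
      _ = (b⁻¹ * a) * y⁻¹ * (σ b * σ y) := by group
      _ = y⁻¹ * (b⁻¹ * a) * (σ b * σ y) := by rw [← hc1 (b⁻¹ * a)]
      _ = y⁻¹ * b⁻¹ * a * (σ b * σ y) := by group
  · intro c hc
    obtain ⟨a, rfl⟩ := QuotientGroup.mk'_surjective Z c
    have hz : a * σ a ∈ Z := by
      have : π (a * σ a) = 1 := by rw [map_mul, ← hmap]; exact hc
      exact (QuotientGroup.eq_one_iff _).mp this
    have hfixz : σ (a * σ a) = a * σ a := by
      rw [map_mul, hσ2]
      have h := hcomm _ hz a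
      -- h : (a * σ a) * a = a * (a * σ a)
      have : a * (σ a * a) = a * (a * σ a) := by rw [← mul_assoc]; exact h
      exact mul_left_cancel this
    have h1 : a * σ a = 1 := hfix _ hz hfixz
    exact ⟨a, h1, ⟨1, by simp [hπ]⟩⟩
end
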